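/- arXiv:1205.0331 — 3 statements merged into one kernel-verified Lean document; each statement's English description precedes it below -/
import Mathlib

section
/- Let d ≥ 1 and L ≥ 1 be integers, let u : ℝ^d → ℝ be continuously differentiable and L·ℤ^d-periodic, and let χ : ℝ^d → ℝ be continuously differentiable with 0 ≤ χ ≤ 1 on ℝ^d, χ = 1 on Γ_L, χ = 0 outside Γ_{3L}, and ‖∇χ(x)‖ ≤ c for all x ∈ ℝ^d, where c ≥ 0. Then ∫_{ℝ^d} ‖∇(χu)(x)‖² dx ≤ 2·3^d ( c² ∫_{Γ_L} u(x)² dx + ∫_{Γ_L} ‖∇u(x)‖² dx ). If moreover c ≤ 1, then ∫_{ℝ^d} ( (χu)² + ‖∇(χu)‖² ) ≤ 3^{d+1} ∫_{Γ_L} ( u² + ‖∇u‖² ). -/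
open MeasureTheory

/-- The supercell `Γ_L = (−L/2, L/2]^d ⊆ ℝ^d` (as a subset of Euclidean space). -/
def superCellE (d : ℕ) (L : ℝ) : Set (EuclideanSpace ℝ (Fin d)) :=
  {x | ∀ i, -L / 2 < x i ∧ x i ≤ L / 2}

open scoped ENNReal

lemma proj_measurable (d : ℕ) (i : Fin d) : Measurable fun x : EuclideanSpace ℝ (Fin d) => x i :=
  (measurable_pi_apply i).comp (MeasurableEquiv.toLp 2 (Fin d → ℝ)).symm.measurable

lemma proj_continuous (d : ℕ) (i : Fin d) : Continuous fun x : EuclideanSpace ℝ (Fin d) => x i :=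
  (continuous_apply i).comp (EuclideanSpace.equiv (Fin d) ℝ).continuous

lemma superCellE_measurable (d : ℕ) (L : ℝ) : MeasurableSet (superCellE d L) := by
  have : superCellE d L = ⋂ i, (fun x : EuclideanSpace ℝ (Fin d) => x i) ⁻¹' Set.Ioc (-L/2) (L/2) := by
    ext x; simp [superCellE, Set.mem_Ioc]
  rw [this]
  exact MeasurableSet.iInter fun i => (proj_measurable d i) measurableSet_Ioc

lemma hyperplane_null (d : ℕ) (i : Fin d) (a : ℝ) :
    volume {x : EuclideanSpace ℝ (Fin d) | x i = a} = 0 := by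
  have h := EuclideanSpace.volume_preserving_symm_measurableEquiv_toLp (Fin d)
  have he : {x : EuclideanSpace ℝ (Fin d) | x i = a}
      = ((MeasurableEquiv.toLp 2 (Fin d → ℝ)).symm) ⁻¹' {y : Fin d → ℝ | y i = a} := rfl
  have hms : MeasurableSet {y : Fin d → ℝ | y i = a} := by
    have : {y : Fin d → ℝ | y i = a} = (fun y : Fin d → ℝ => y i) ⁻¹' {a} := rfl
    rw [this]; exact (measurable_pi_apply i) (measurableSet_singleton a)
  rw [he, h.measure_preimage hms.nullMeasurableSet, volume_pi]
  exact MeasureTheory.Measure.pi_hyperplane (fun _ => (volume : Measure ℝ)) i a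

noncomputable def transV (d L : ℕ) (R : Fin d → ℤ) : EuclideanSpace ℝ (Fin d) :=
  (EuclideanSpace.equiv (Fin d) ℝ).symm (fun i => (L : ℝ) * (R i : ℝ))

lemma transV_apply (d L : ℕ) (R : Fin d → ℤ) (i : Fin d) :
    transV d L R i = (L : ℝ) * (R i : ℝ) := rfl

lemma lintegral_biUnion_finset_le' {α ι : Type*} [MeasurableSpace α] (μ : MeasureTheory.Measure α)
    (g : α → ℝ≥0∞) (s : Finset ι) (A : ι → Set α) :
    ∫⁻ x in ⋃ i ∈ s, A i, g x ∂μ ≤ ∑ i ∈ s, ∫⁻ x in A i, g x ∂μ := by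
  classical
  refine Finset.induction_on s (by simp) ?_
  intro a t ha ih
  rw [Finset.set_biUnion_insert, Finset.sum_insert ha]
  exact le_trans (lintegral_union_le _ _ _) (add_le_add le_rfl ih)

set_option maxHeartbeats 1000000 in
lemma periodic_cover_bound (d L : ℕ) (hL : 1 ≤ L) (g : EuclideanSpace ℝ (Fin d) → ℝ≥0∞)
    (hper : ∀ (x : EuclideanSpace ℝ (Fin d)) (R : Fin d → ℤ), g (x + transV d L R) = g x) :
    ∫⁻ x in superCellE d (3 * (L : ℝ)), g x ≤ 3 ^ d * ∫⁻ x in superCellE d (L : ℝ), g x := by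
  classical
  set T := superCellE d (L : ℝ) with hT
  set s : Finset (Fin d → ℤ) := Fintype.piFinset (fun _ => ({-1, 0, 1} : Finset ℤ)) with hs
  set A : (Fin d → ℤ) → Set (EuclideanSpace ℝ (Fin d)) := fun R => (· + transV d L R) '' T with hA
  have hLpos : (0:ℝ) < L := by exact_mod_cast hL
  have hcover : superCellE d (3 * (L : ℝ)) ⊆ ⋃ R ∈ s, A R := by
    intro x hx
    set R : Fin d → ℤ := fun i => if x i ≤ -(L:ℝ)/2 then -1 else if x i ≤ (L:ℝ)/2 then 0 else 1 with hR
    have hRs : R ∈ s := by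
      rw [hs, Fintype.mem_piFinset]
      intro i
      simp only [hR, Finset.mem_insert, Finset.mem_singleton]
      split_ifs <;> simp
    refine Set.mem_biUnion hRs ?_
    refine ⟨x - transV d L R, ?_, sub_add_cancel x (transV d L R)⟩
    intro i
    have hxi := hx i
    have hsub : (x - transV d L R) i = x i - (L:ℝ) * (R i : ℝ) := rfl
    rw [hsub, hR]
    simp only
    split_ifs with h1 h2
    · push_cast
      constructor <;> nlinarith [hxi.1, hxi.2]
    · push_cast
      constructor <;> nlinarith [hxi.1, hxi.2]
    · push_cast
      constructor <;> nlinarith [hxi.1, hxi.2]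
  have hAint : ∀ R, ∫⁻ x in A R, g x = ∫⁻ x in T, g x := by
    intro R
    have hmp : MeasurePreserving (· + transV d L R)
        (volume : Measure (EuclideanSpace ℝ (Fin d))) volume :=
      measurePreserving_add_right volume (transV d L R)
    have hemb : MeasurableEmbedding (· + transV d L R) :=
      (MeasurableEquiv.addRight (transV d L R)).measurableEmbedding
    rw [hA]
    rw [← hmp.setLIntegral_comp_emb hemb g T]
    exact lintegral_congr fun y => hper y R
  calc ∫⁻ x in superCellE d (3 * (L:ℝ)), g x
      ≤ ∫⁻ x in ⋃ R ∈ s, A R, g x := lintegral_mono_set hcover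
    _ ≤ ∑ R ∈ s, ∫⁻ x in A R, g x := lintegral_biUnion_finset_le' _ _ _ _
    _ = ∑ R ∈ s, ∫⁻ x in T, g x := Finset.sum_congr rfl fun R _ => hAint R
    _ = s.card * ∫⁻ x in T, g x := by rw [Finset.sum_const, nsmul_eq_mul]
    _ = 3 ^ d * ∫⁻ x in T, g x := by
        congr 1
        rw [hs, Fintype.card_piFinset]
        simp

lemma gradient_periodic_pt (d L : ℕ) (u : EuclideanSpace ℝ (Fin d) → ℝ) (hu : ContDiff ℝ 1 u)
    (huper : ∀ (x : EuclideanSpace ℝ (Fin d)) (R : Fin d → ℤ), u (x + transV d L R) = u x)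
    (x : EuclideanSpace ℝ (Fin d)) (R : Fin d → ℤ) :
    gradient u (x + transV d L R) = gradient u x := by
  set v := transV d L R with hv
  have hfun : (fun y => u (y + v)) = u := funext fun y => huper y R
  have htr : HasFDerivAt (fun y : EuclideanSpace ℝ (Fin d) => y + v)
      (ContinuousLinearMap.id ℝ _) x := (hasFDerivAt_id x).add_const v
  have hC : HasFDerivAt u (fderiv ℝ u (x + v)) (x + v) :=
    ((hu.differentiable one_ne_zero) (x + v)).hasFDerivAt
  have hcomp : HasFDerivAt (fun y => u (y + v)) (fderiv ℝ u (x + v)) x := by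
    have := hC.comp x htr
    rw [ContinuousLinearMap.comp_id] at this
    exact this
  rw [hfun] at hcomp
  unfold gradient
  rw [hcomp.fderiv]

set_option maxHeartbeats 1600000 in
/-- `H¹` norm equivalence between `ℝ^d` and `Γ_L` for a cut-off periodized function `χu`
(inequality (6.3) of the paper). -/
theorem h1_cutoff_periodic_le (d L : ℕ) (hd : 1 ≤ d) (hL : 1 ≤ L)
    (u χ : EuclideanSpace ℝ (Fin d) → ℝ)
    (hu : ContDiff ℝ 1 u)
    (huper : ∀ (x : EuclideanSpace ℝ (Fin d)) (R : Fin d → ℤ),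
      u (x + (EuclideanSpace.equiv (Fin d) ℝ).symm (fun i => (L : ℝ) * (R i : ℝ))) = u x)
    (hχ : ContDiff ℝ 1 χ) (hχ0 : ∀ x, 0 ≤ χ x) (hχ1 : ∀ x, χ x ≤ 1)
    (hχeq1 : ∀ x ∈ superCellE d (L : ℝ), χ x = 1)
    (hχeq0 : ∀ x ∉ superCellE d (3 * (L : ℝ)), χ x = 0)
    (c : ℝ) (hc : 0 ≤ c) (hgradχ : ∀ x, ‖gradient χ x‖ ≤ c) :
    (∫⁻ x, ENNReal.ofReal (‖gradient (fun y => χ y * u y) x‖ ^ 2) ≤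
        2 * 3 ^ d *
          (ENNReal.ofReal (c ^ 2) *
              (∫⁻ x in superCellE d (L : ℝ), ENNReal.ofReal ((u x) ^ 2)) +
            ∫⁻ x in superCellE d (L : ℝ), ENNReal.ofReal (‖gradient u x‖ ^ 2))) ∧
    (c ≤ 1 →
      ∫⁻ x, ENNReal.ofReal ((χ x * u x) ^ 2 + ‖gradient (fun y => χ y * u y) x‖ ^ 2) ≤
        3 ^ (d + 1) *
          ∫⁻ x in superCellE d (L : ℝ), ENNReal.ofReal ((u x) ^ 2 + ‖gradient u x‖ ^ 2)) := by
  classical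
  have huper' : ∀ (x : EuclideanSpace ℝ (Fin d)) (R : Fin d → ℤ),
      u (x + transV d L R) = u x := huper
  have hud : ∀ x, DifferentiableAt ℝ u x := fun x => (hu.differentiable one_ne_zero) x
  have hχd : ∀ x, DifferentiableAt ℝ χ x := fun x => (hχ.differentiable one_ne_zero) x
  -- product rule for the gradient
  have hprod : ∀ x, gradient (fun y => χ y * u y) x
      = χ x • gradient u x + u x • gradient χ x := by
    intro x
    unfold gradient
    rw [fderiv_fun_mul (hχd x) (hud x)]
    simp [map_add, _root_.map_smul]
  -- pointwise norm bound
  have hptkey : ∀ x, ‖gradient (fun y => χ y * u y) x‖ ≤ ‖gradient u x‖ + c * |u x| := by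
    intro x
    rw [hprod x]
    refine le_trans (norm_add_le _ _) ?_
    have h1 : ‖χ x • gradient u x‖ ≤ ‖gradient u x‖ := by
      rw [norm_smul, Real.norm_eq_abs, abs_of_nonneg (hχ0 x)]
      nlinarith [norm_nonneg (gradient u x), hχ1 x, hχ0 x]
    have h2 : ‖u x • gradient χ x‖ ≤ c * |u x| := by
      rw [norm_smul, Real.norm_eq_abs, mul_comm]
      exact mul_le_mul_of_nonneg_right (hgradχ x) (abs_nonneg _)
    linarith
  have hsq : ∀ x, ‖gradient (fun y => χ y * u y) x‖ ^ 2
      ≤ 2 * (c ^ 2 * u x ^ 2 + ‖gradient u x‖ ^ 2) := by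
    intro x
    have h := hptkey x
    nlinarith [norm_nonneg (gradient (fun y => χ y * u y) x), norm_nonneg (gradient u x),
      abs_nonneg (u x), sq_abs (u x), sq_nonneg (‖gradient u x‖ - c * |u x|),
      mul_nonneg hc (abs_nonneg (u x))]
  -- continuity / measurability
  have hgradu_cont : Continuous (gradient u) := by
    have h1 := hu.continuous_fderiv one_ne_zero
    exact ((InnerProductSpace.toDual ℝ
      (EuclideanSpace ℝ (Fin d))).symm.continuous.comp h1 : _)
  have hmu2 : Measurable fun x => ENNReal.ofReal (u x ^ 2) :=
    ((hu.continuous.pow 2).measurable).ennreal_ofReal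
  have hmgu2 : Measurable fun x => ENNReal.ofReal (‖gradient u x‖ ^ 2) :=
    ((hgradu_cont.norm.pow 2).measurable).ennreal_ofReal
  have hmcu2 : Measurable fun x => ENNReal.ofReal (c ^ 2 * u x ^ 2) :=
    ((continuous_const.mul (hu.continuous.pow 2)).measurable).ennreal_ofReal
  -- geometry
  set M : ℝ := 3 * (L : ℝ) with hM
  set S := superCellE d M with hS
  set T := superCellE d (L : ℝ) with hT
  set C : Set (EuclideanSpace ℝ (Fin d)) := {x | ∀ i, -M / 2 ≤ x i ∧ x i ≤ M / 2} with hC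
  have hS_meas : MeasurableSet S := superCellE_measurable d M
  have hCclosed : IsClosed C := by
    have hCeq : C = ⋂ i, (fun x : EuclideanSpace ℝ (Fin d) => x i) ⁻¹' Set.Icc (-M/2) (M/2) := by
      ext x; simp [hC, Set.mem_Icc]
    rw [hCeq]
    exact isClosed_iInter fun i => IsClosed.preimage (proj_continuous d i) isClosed_Icc
  have hSsubC : S ⊆ C := fun x hx i => ⟨le_of_lt (hx i).1, (hx i).2⟩
  have hCc : Cᶜ ⊆ Sᶜ := Set.compl_subset_compl.mpr hSsubC
  have hzero_out : ∀ x ∈ Cᶜ, gradient (fun y => χ y * u y) x = 0 ∧ χ x * u x = 0 := by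
    intro x hx
    have hopen : IsOpen Cᶜ := hCclosed.isOpen_compl
    have hev : (fun y => χ y * u y) =ᶠ[nhds x] (fun _ => (0 : ℝ)) := by
      filter_upwards [hopen.mem_nhds hx] with y hy
      rw [hχeq0 y (hCc hy), zero_mul]
    refine ⟨?_, by rw [hχeq0 x (hCc hx), zero_mul]⟩
    rw [hev.gradient_eq, gradient_fun_const]
  have hN : volume (⋃ i, {x : EuclideanSpace ℝ (Fin d) | x i = -M / 2}) = 0 :=
    measure_iUnion_null fun i => hyperplane_null d i _
  have hScompl : ∀ (f : EuclideanSpace ℝ (Fin d) → ℝ≥0∞), (∀ x ∈ Cᶜ, f x = 0) →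
      ∫⁻ x in Sᶜ, f x = 0 := by
    intro f hf
    have hsub : Sᶜ ⊆ Cᶜ ∪ ⋃ i, {x : EuclideanSpace ℝ (Fin d) | x i = -M / 2} := by
      intro x hx
      by_cases hxC : x ∈ C
      · right
        simp only [hS, superCellE, Set.mem_compl_iff, Set.mem_setOf_eq, not_forall] at hx
        obtain ⟨i, hi⟩ := hx
        refine Set.mem_iUnion.2 ⟨i, ?_⟩
        have h1 := (hxC i).1
        have h2 := (hxC i).2
        simp only [Set.mem_setOf_eq]
        by_contra hne
        exact hi ⟨lt_of_le_of_ne h1 (fun h => hne h.symm), h2⟩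
      · left; exact hxC
    have hle : ∫⁻ x in Sᶜ, f x ≤ 0 := by
      calc ∫⁻ x in Sᶜ, f x
          ≤ ∫⁻ x in Cᶜ ∪ ⋃ i, {x : EuclideanSpace ℝ (Fin d) | x i = -M / 2}, f x :=
            lintegral_mono_set hsub
        _ ≤ (∫⁻ x in Cᶜ, f x)
            + ∫⁻ x in ⋃ i, {x : EuclideanSpace ℝ (Fin d) | x i = -M / 2}, f x :=
            lintegral_union_le _ _ _
        _ = 0 := by
            rw [setLIntegral_measure_zero _ _ hN,
              setLIntegral_congr_fun hCclosed.isOpen_compl.measurableSet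
                ((fun x hx => hf x hx) :
                  Set.EqOn f (fun _ => (0:ℝ≥0∞)) Cᶜ)]
            simp
    exact le_antisymm hle zero_le
  -- gradient periodicity
  have hgradper : ∀ (x : EuclideanSpace ℝ (Fin d)) (R : Fin d → ℤ),
      gradient u (x + transV d L R) = gradient u x :=
    gradient_periodic_pt d L u hu huper'
  constructor
  · -- part 1
    set g1 : EuclideanSpace ℝ (Fin d) → ℝ≥0∞ :=
      fun x => ENNReal.ofReal (c ^ 2 * u x ^ 2) + ENNReal.ofReal (‖gradient u x‖ ^ 2) with hg1
    have hg1meas : Measurable g1 := hmcu2.add hmgu2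
    have hg1per : ∀ (x : EuclideanSpace ℝ (Fin d)) (R : Fin d → ℤ),
        g1 (x + transV d L R) = g1 x := by
      intro x R
      simp only [hg1]
      rw [huper' x R, hgradper x R]
    have hout1 : ∀ x ∈ Cᶜ,
        ENNReal.ofReal (‖gradient (fun y => χ y * u y) x‖ ^ 2) = 0 := by
      intro x hx
      rw [(hzero_out x hx).1]
      simp
    calc ∫⁻ x, ENNReal.ofReal (‖gradient (fun y => χ y * u y) x‖ ^ 2)
        = (∫⁻ x in S, ENNReal.ofReal (‖gradient (fun y => χ y * u y) x‖ ^ 2))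
          + ∫⁻ x in Sᶜ, ENNReal.ofReal (‖gradient (fun y => χ y * u y) x‖ ^ 2) :=
          (lintegral_add_compl _ hS_meas).symm
      _ = ∫⁻ x in S, ENNReal.ofReal (‖gradient (fun y => χ y * u y) x‖ ^ 2) := by
          rw [hScompl _ hout1, add_zero]
      _ ≤ ∫⁻ x in S, 2 * g1 x := by
          refine lintegral_mono fun x => ?_
          have h2 : ENNReal.ofReal (2 * (c ^ 2 * u x ^ 2 + ‖gradient u x‖ ^ 2)) = 2 * g1 x := by
            rw [ENNReal.ofReal_mul (by norm_num : (0:ℝ) ≤ 2),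
              ENNReal.ofReal_add (by positivity) (by positivity), ENNReal.ofReal_ofNat]
          rw [← h2]
          exact ENNReal.ofReal_le_ofReal (hsq x)
      _ = 2 * ∫⁻ x in S, g1 x := lintegral_const_mul 2 hg1meas
      _ ≤ 2 * (3 ^ d * ∫⁻ x in T, g1 x) :=
          mul_le_mul_right (periodic_cover_bound d L hL g1 hg1per) 2
      _ = 2 * 3 ^ d * ∫⁻ x in T, g1 x := by rw [mul_assoc]
      _ = 2 * 3 ^ d *
          (ENNReal.ofReal (c ^ 2) * (∫⁻ x in T, ENNReal.ofReal (u x ^ 2))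
            + ∫⁻ x in T, ENNReal.ofReal (‖gradient u x‖ ^ 2)) := by
          congr 1
          rw [hg1]
          rw [lintegral_add_left hmcu2]
          congr 1
          have : ∀ x, ENNReal.ofReal (c ^ 2 * u x ^ 2)
              = ENNReal.ofReal (c ^ 2) * ENNReal.ofReal (u x ^ 2) := fun x =>
            ENNReal.ofReal_mul (sq_nonneg c)
          rw [lintegral_congr fun x => this x, lintegral_const_mul _ hmu2]
  · -- part 2
    intro hc1
    set h2 : EuclideanSpace ℝ (Fin d) → ℝ≥0∞ :=
      fun x => ENNReal.ofReal (u x ^ 2 + ‖gradient u x‖ ^ 2) with hh2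
    have hh2meas : Measurable h2 :=
      (((hu.continuous.pow 2).add (hgradu_cont.norm.pow 2)).measurable).ennreal_ofReal
    have hh2per : ∀ (x : EuclideanSpace ℝ (Fin d)) (R : Fin d → ℤ),
        h2 (x + transV d L R) = h2 x := by
      intro x R
      simp only [hh2]
      rw [huper' x R, hgradper x R]
    have hout2 : ∀ x ∈ Cᶜ,
        ENNReal.ofReal ((χ x * u x) ^ 2
          + ‖gradient (fun y => χ y * u y) x‖ ^ 2) = 0 := by
      intro x hx
      rw [(hzero_out x hx).1, (hzero_out x hx).2]
      simp
    have hpt2 : ∀ x, (χ x * u x) ^ 2 + ‖gradient (fun y => χ y * u y) x‖ ^ 2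
        ≤ 3 * (u x ^ 2 + ‖gradient u x‖ ^ 2) := by
      intro x
      have hχsq : (χ x * u x) ^ 2 ≤ u x ^ 2 := by
        rw [mul_pow]
        have h1 : χ x ^ 2 ≤ 1 := by nlinarith [hχ0 x, hχ1 x]
        nlinarith [mul_le_mul_of_nonneg_right h1 (sq_nonneg (u x))]
      have hcsq : c ^ 2 * u x ^ 2 ≤ u x ^ 2 := by
        have h1 : c ^ 2 ≤ 1 := by nlinarith
        nlinarith [mul_le_mul_of_nonneg_right h1 (sq_nonneg (u x))]
      have h := hsq x
      nlinarith [sq_nonneg ‖gradient u x‖]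
    calc ∫⁻ x, ENNReal.ofReal ((χ x * u x) ^ 2
          + ‖gradient (fun y => χ y * u y) x‖ ^ 2)
        = (∫⁻ x in S, ENNReal.ofReal ((χ x * u x) ^ 2
            + ‖gradient (fun y => χ y * u y) x‖ ^ 2))
          + ∫⁻ x in Sᶜ, ENNReal.ofReal ((χ x * u x) ^ 2
            + ‖gradient (fun y => χ y * u y) x‖ ^ 2) :=
          (lintegral_add_compl _ hS_meas).symm
      _ = ∫⁻ x in S, ENNReal.ofReal ((χ x * u x) ^ 2
            + ‖gradient (fun y => χ y * u y) x‖ ^ 2) := by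
          rw [hScompl _ hout2, add_zero]
      _ ≤ ∫⁻ x in S, 3 * h2 x := by
          refine lintegral_mono fun x => ?_
          have h3 : ENNReal.ofReal (3 * (u x ^ 2 + ‖gradient u x‖ ^ 2)) = 3 * h2 x := by
            rw [ENNReal.ofReal_mul (by norm_num : (0:ℝ) ≤ 3), ENNReal.ofReal_ofNat]
          rw [← h3]
          exact ENNReal.ofReal_le_ofReal (hpt2 x)
      _ = 3 * ∫⁻ x in S, h2 x := lintegral_const_mul 3 hh2meas
      _ ≤ 3 * (3 ^ d * ∫⁻ x in T, h2 x) :=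
          mul_le_mul_right (periodic_cover_bound d L hL h2 hh2per) 3
      _ = 3 ^ (d + 1) * ∫⁻ x in T, h2 x := by rw [pow_succ, ← mul_assoc, mul_comm (3 ^ d : ℝ≥0∞) 3, mul_assoc]
end

section
/- Let E be a nonzero finite-dimensional real inner product space, T : E → E a symmetric linear map (⟨Tx, y⟩ = ⟨x, Ty⟩ for all x, y), μ ∈ ℝ, and α ∈ ℝ a number such that α ≤ |ν − μ| / (1 + |ν|) for every eigenvalue ν of T. Then for every w ∈ E there exists v ∈ E with ‖v‖ = ‖w‖, ⟨Tv, v⟩ = ⟨Tw, w⟩, and ⟨Tw − μw, v⟩ ≥ α · ( ‖w‖² + |⟨Tw, w⟩| ). In particular, inf_{w ≠ 0} sup_{v ≠ 0} |⟨(T − μ)w, v⟩| / (N(w) N(v)) ≥ α, where N(x) := ( ‖x‖² + |⟨Tx, x⟩| )^{1/2}. -/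
open RealInnerProductSpace

/-- Discrete inf–sup lower bound for a symmetric endomorphism of a finite-dimensional real
inner product space whose eigenvalues `ν` all satisfy `α ≤ |ν − μ|/(1 + |ν|)`
(inequality (6.4) of the paper). -/
theorem infsup_of_symmetric_eigenvalue_gap {E : Type*} [NormedAddCommGroup E]
    [InnerProductSpace ℝ E] [FiniteDimensional ℝ E] [Nontrivial E]
    (T : E →ₗ[ℝ] E) (hT : ∀ x y : E, ⟪T x, y⟫ = ⟪x, T y⟫)
    (μ α : ℝ)
    (hα : ∀ ν : ℝ, Module.End.HasEigenvalue T ν → α ≤ |ν - μ| / (1 + |ν|)) :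
    (∀ w : E, ∃ v : E, ‖v‖ = ‖w‖ ∧ ⟪T v, v⟫ = ⟪T w, w⟫ ∧
      α * (‖w‖ ^ 2 + |⟪T w, w⟫|) ≤ ⟪T w - μ • w, v⟫) ∧
    ∀ w : E, w ≠ 0 → ∃ v : E, v ≠ 0 ∧
      α * (Real.sqrt (‖w‖ ^ 2 + |⟪T w, w⟫|) * Real.sqrt (‖v‖ ^ 2 + |⟪T v, v⟫|)) ≤
        |⟪T w - μ • w, v⟫| := by
  have hT' : T.IsSymmetric := hT
  set n := Module.finrank ℝ E with hn'
  have hn : Module.finrank ℝ E = n := rfl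
  set b := hT'.eigenvectorBasis hn with hb
  set ν := hT'.eigenvalues hn with hν
  -- sign function
  set s : Fin n → ℝ := fun i => if μ ≤ ν i then (1 : ℝ) else -1 with hs
  have hs1 : ∀ i, s i * s i = 1 := by
    intro i; simp only [hs]; split <;> norm_num
  have hsabs : ∀ i, s i * (ν i - μ) = |ν i - μ| := by
    intro i; simp only [hs]; split
    · rw [abs_of_nonneg (by linarith)]; ring
    · rw [abs_of_neg (by linarith)]; ring
  have key : ∀ i, α * (1 + |ν i|) ≤ |ν i - μ| := by
    intro i
    have h := hα (ν i) (hT'.hasEigenvalue_eigenvalues hn i)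
    have hpos : (0:ℝ) < 1 + |ν i| := by positivity
    calc α * (1 + |ν i|) ≤ (|ν i - μ| / (1 + |ν i|)) * (1 + |ν i|) := by
          exact mul_le_mul_of_nonneg_right h hpos.le
      _ = |ν i - μ| := by field_simp
  -- inner product via coordinates
  have inner_eq : ∀ x y : E, ⟪x, y⟫ = ∑ i, b.repr x i * b.repr y i := by
    intro x y
    rw [← b.repr.inner_map_map x y, PiLp.inner_apply]
    simp only [RCLike.inner_apply, starRingEnd_apply, star_trivial]
    exact Finset.sum_congr rfl (fun _ _ => mul_comm _ _)
  have reprT : ∀ (x : E) (i : Fin n), b.repr (T x) i = ν i * b.repr x i := fun x i =>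
    hT'.eigenvectorBasis_apply_self_apply hn x i
  have main : ∀ w : E, ∃ v : E, ‖v‖ = ‖w‖ ∧ ⟪T v, v⟫ = ⟪T w, w⟫ ∧
      α * (‖w‖ ^ 2 + |⟪T w, w⟫|) ≤ ⟪T w - μ • w, v⟫ := by
    intro w
    set c : EuclideanSpace ℝ (Fin n) := b.repr w with hc
    set f : EuclideanSpace ℝ (Fin n) := WithLp.toLp 2 (fun i => s i * c i) with hf
    refine ⟨b.repr.symm f, ?_, ?_, ?_⟩
    · rw [← b.repr.norm_map w, b.repr.symm.norm_map f]
      simp only [EuclideanSpace.norm_eq]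
      congr 1
      apply Finset.sum_congr rfl
      intro i _
      have h1 : |s i| = 1 := by simp only [hs]; split <;> norm_num
      simp [hf, abs_mul, h1, ← hc]
    · rw [inner_eq, inner_eq]
      apply Finset.sum_congr rfl
      intro i _
      rw [reprT, reprT]
      simp only [LinearIsometryEquiv.apply_symm_apply]
      show ν i * f i * f i = ν i * c i * c i
      simp only [hf]
      linear_combination ν i * c i * c i * hs1 i
    · rw [inner_eq (T w - μ • w) (b.repr.symm f)]
      have hrepr : ∀ i, b.repr (T w - μ • w) i = (ν i - μ) * c i := by
        intro i
        simp [map_sub, map_smul, reprT, ← hc, sub_mul]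
      have hsum : ∑ i, b.repr (T w - μ • w) i *
          b.repr (b.repr.symm f) i = ∑ i, |ν i - μ| * c i ^ 2 := by
        apply Finset.sum_congr rfl
        intro i _
        rw [hrepr]
        simp only [LinearIsometryEquiv.apply_symm_apply]
        show (ν i - μ) * c i * f i = |ν i - μ| * c i ^ 2
        simp only [hf]
        rw [← hsabs i]; ring
      rw [hsum]
      have hnorm : ‖w‖ ^ 2 = ∑ i, c i ^ 2 := by
        rw [← real_inner_self_eq_norm_sq, inner_eq]
        apply Finset.sum_congr rfl; intro i _; rw [← hc]; ring
      have hTww : ⟪T w, w⟫ = ∑ i, ν i * c i ^ 2 := by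
        rw [inner_eq]
        apply Finset.sum_congr rfl; intro i _; rw [reprT, ← hc]; ring
      rw [hnorm, hTww]
      rcases le_or_gt α 0 with hα0 | hα0
      · have h1 : (0:ℝ) ≤ ∑ i, |ν i - μ| * c i ^ 2 :=
          Finset.sum_nonneg fun i _ => by positivity
        have h2 : (0:ℝ) ≤ ∑ i, c i ^ 2 + |∑ i, ν i * c i ^ 2| := by
          have : (0:ℝ) ≤ ∑ i, c i ^ 2 := Finset.sum_nonneg fun i _ => by positivity
          positivity
        nlinarith
      · have h1 : ∑ i, c i ^ 2 + |∑ i, ν i * c i ^ 2| ≤ ∑ i, (1 + |ν i|) * c i ^ 2 := by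
          have habs : |∑ i, ν i * c i ^ 2| ≤ ∑ i, |ν i| * c i ^ 2 := by
            calc |∑ i, ν i * c i ^ 2| ≤ ∑ i, |ν i * c i ^ 2| :=
                Finset.abs_sum_le_sum_abs _ _
              _ = ∑ i, |ν i| * c i ^ 2 := by
                apply Finset.sum_congr rfl; intro i _
                rw [abs_mul, abs_of_nonneg (by positivity : (0:ℝ) ≤ c i ^ 2)]
          have : ∑ i, (1 + |ν i|) * c i ^ 2 = ∑ i, c i ^ 2 + ∑ i, |ν i| * c i ^ 2 := by
            rw [← Finset.sum_add_distrib]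
            apply Finset.sum_congr rfl; intro i _; ring
          linarith
        calc α * (∑ i, c i ^ 2 + |∑ i, ν i * c i ^ 2|)
            ≤ α * ∑ i, (1 + |ν i|) * c i ^ 2 := by
              exact mul_le_mul_of_nonneg_left h1 hα0.le
          _ = ∑ i, α * (1 + |ν i|) * c i ^ 2 := by
              rw [Finset.mul_sum]; apply Finset.sum_congr rfl; intro i _; ring
          _ ≤ ∑ i, |ν i - μ| * c i ^ 2 := by
              apply Finset.sum_le_sum; intro i _
              exact mul_le_mul_of_nonneg_right (key i) (by positivity)
  refine ⟨main, ?_⟩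
  intro w hw
  obtain ⟨v, hnv, hTv, hle⟩ := main w
  have hv0 : v ≠ 0 := by
    intro h; apply hw
    rw [h, norm_zero] at hnv
    exact norm_eq_zero.mp hnv.symm
  refine ⟨v, hv0, ?_⟩
  have ha : (0:ℝ) ≤ ‖w‖ ^ 2 + |⟪T w, w⟫| := by positivity
  have : Real.sqrt (‖w‖ ^ 2 + |⟪T w, w⟫|) * Real.sqrt (‖v‖ ^ 2 + |⟪T v, v⟫|)
      = ‖w‖ ^ 2 + |⟪T w, w⟫| := by
    rw [hnv, hTv, Real.mul_self_sqrt ha]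
  rw [this]
  exact hle.trans (le_abs_self _)
end

section
/- Let H be a real inner product space, q ≥ 1 an integer, (ζ_1, …, ζ_q) an orthonormal family in H, and (e_1, …, e_q) vectors in H such that ‖e_i − ζ_i‖ ≤ 1/(4q) for every 1 ≤ i ≤ q. Then the family (e_1, …, e_q) is linearly independent, and for all real numbers α_1, …, α_q one has max_{1 ≤ i ≤ q} |α_i| ≤ 2 ‖ Σ_{i=1}^q α_i e_i ‖. -/
/-- If each `e i` is within `1/(4q)` of an orthonormal family `(ζ i)` in a real inner product
space, then `(e i)` is linearly independent and the coefficients of any linear combination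
`Σ αᵢ eᵢ` satisfy `maxᵢ |αᵢ| ≤ 2 ‖Σ αᵢ eᵢ‖` (Section 4.3 of the paper). -/
theorem linearIndependent_and_coeff_bound_of_near_orthonormal
    {H : Type*} [NormedAddCommGroup H] [InnerProductSpace ℝ H]
    (q : ℕ) (hq : 1 ≤ q) (ζ e : Fin q → H) (hζ : Orthonormal ℝ ζ)
    (he : ∀ i, ‖e i - ζ i‖ ≤ 1 / (4 * q)) :
    LinearIndependent ℝ e ∧
    ∀ (α : Fin q → ℝ) (i : Fin q), |α i| ≤ 2 * ‖∑ j, α j • e j‖ := by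
  have hq0 : (0 : ℝ) < q := by exact_mod_cast hq
  have key : ∀ (α : Fin q → ℝ) (i : Fin q), |α i| ≤ 2 * ‖∑ j, α j • e j‖ := by
    intro α i
    haveI : NeZero q := ⟨by omega⟩
    have hne : (Finset.univ : Finset (Fin q)).Nonempty := Finset.univ_nonempty
    set M := Finset.univ.sup' hne (fun j => |α j|) with hMdef
    obtain ⟨i0, -, hi0⟩ := Finset.exists_mem_eq_sup' hne (fun j => |α j|)
    have hMi : ∀ j, |α j| ≤ M := fun j => Finset.le_sup' (fun j => |α j|) (Finset.mem_univ j)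
    have hM0 : 0 ≤ M := le_trans (abs_nonneg _) (hMi i)
    -- ‖Σ α ζ‖² = Σ α²
    have hnorm2 : ‖∑ j, α j • ζ j‖ ^ 2 = ∑ j, (α j) ^ 2 := by
      have := hζ.inner_sum α α Finset.univ
      rw [real_inner_self_eq_norm_sq] at this
      simpa [pow_two] using this
    -- M ≤ ‖Σ α ζ‖
    have hMle : M ≤ ‖∑ j, α j • ζ j‖ := by
      have h1 : M ^ 2 ≤ ‖∑ j, α j • ζ j‖ ^ 2 := by
        rw [hnorm2, hMdef, hi0]
        calc |α i0| ^ 2 = (α i0) ^ 2 := by rw [sq_abs]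
          _ ≤ ∑ j, (α j) ^ 2 :=
            Finset.single_le_sum (fun j _ => sq_nonneg (α j)) (Finset.mem_univ i0)
      exact le_of_sq_le_sq h1 (norm_nonneg _) |>.trans_eq rfl
    -- triangle
    have htri : ‖∑ j, α j • ζ j‖ ≤ ‖∑ j, α j • e j‖ + M / 4 := by
      have hdecomp : ∑ j, α j • ζ j = (∑ j, α j • e j) + ∑ j, α j • (ζ j - e j) := by
        rw [← Finset.sum_add_distrib]
        congr 1; ext j
        rw [← smul_add]; congr 1; abel
      rw [hdecomp]
      refine (norm_add_le _ _).trans (add_le_add le_rfl ?_)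
      calc ‖∑ j, α j • (ζ j - e j)‖ ≤ ∑ j, ‖α j • (ζ j - e j)‖ := norm_sum_le _ _
        _ ≤ ∑ j : Fin q, M * (1 / (4 * q)) := by
            refine Finset.sum_le_sum fun j _ => ?_
            rw [norm_smul, Real.norm_eq_abs, norm_sub_rev]
            exact mul_le_mul (hMi j) (he j) (norm_nonneg _) hM0
        _ = M / 4 := by
            rw [Finset.sum_const, Finset.card_univ, Fintype.card_fin, nsmul_eq_mul]
            field_simp
    have hM2 : M ≤ 2 * ‖∑ j, α j • e j‖ := by
      have : M ≤ ‖∑ j, α j • e j‖ + M / 4 := hMle.trans htri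
      nlinarith [norm_nonneg (∑ j, α j • e j)]
    exact (hMi i).trans hM2
  refine ⟨?_, key⟩
  rw [Fintype.linearIndependent_iff]
  intro g hg i
  have := key g i
  rw [hg] at this
  simp at this
  exact abs_eq_zero.mp (le_antisymm (by simpa using this) (abs_nonneg _))
end
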